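/- Let c_k(H) = min Ncut(Γ_V^k) over all partitions of V into k nonempty disjoint clusters, where Ncut(Γ_V^k) = Σ_{i=1}^{k} X_iᵀ(D−W)X_i / (X_iᵀDX_i) with X the {0,1} indicator matrix of the partition. If λ_1 ≤ ⋯ ≤ λ_{|V|} are the eigenvalues of L = D^{−1/2}(D−W)D^{−1/2}, then Σ_{i=1}^{k} λ_i ≤ c_k(H). -/

import Mathlib

open Matrix Finset


lemma ncut_aux_exchange {n k : ℕ} (hk : k ≤ n) (μ b : Fin n → ℝ) (hmono : Monotone μ)
    (hb0 : ∀ i, 0 ≤ b i) (hb1 : ∀ i, b i ≤ 1) (hbs : ∑ i, b i = (k : ℝ)) :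
    ∑ i ∈ Finset.univ.filter (fun i : Fin n => (i : ℕ) < k), μ i ≤ ∑ i, μ i * b i := by
  rcases Nat.eq_zero_or_pos k with hk0 | hkpos
  · subst hk0
    have hb : ∀ i ∈ (Finset.univ : Finset (Fin n)), b i = 0 :=
      (Finset.sum_eq_zero_iff_of_nonneg (fun i _ => hb0 i)).mp (by simpa using hbs)
    have : ∑ i, μ i * b i = 0 :=
      Finset.sum_eq_zero fun i _ => by rw [hb i (Finset.mem_univ i), mul_zero]
    simp [this]
  · have hkn : k - 1 < n := by omega
    set t : ℝ := μ ⟨k - 1, hkn⟩ with ht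
    set χ : Fin n → ℝ := fun i => if (i : ℕ) < k then 1 else 0 with hχ
    have key : ∀ i : Fin n, 0 ≤ (μ i - t) * (b i - χ i) := by
      intro i
      by_cases hik : (i : ℕ) < k
      · have h1 : μ i ≤ t := hmono (by simp [Fin.le_def]; omega)
        have h2 : b i - χ i ≤ 0 := by simp [hχ, hik]; linarith [hb1 i]
        nlinarith
      · have h1 : t ≤ μ i := hmono (by simp [Fin.le_def]; omega)
        have h2 : 0 ≤ b i - χ i := by simp [hχ, hik]; exact hb0 i
        nlinarith
    have hsum : (0:ℝ) ≤ ∑ i, (μ i - t) * (b i - χ i) :=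
      Finset.sum_nonneg fun i _ => key i
    have hχs : ∑ i, χ i = (k : ℝ) := by
      rw [hχ]
      rw [Fin.sum_univ_eq_sum_range (fun i => if i < k then (1:ℝ) else 0)]
      rw [Finset.sum_boole]
      have : (Finset.range n).filter (fun i => i < k) = Finset.range k := by
        ext i; simp; omega
      simp [this]
    have hμχ : ∑ i, μ i * χ i
        = ∑ i ∈ Finset.univ.filter (fun i : Fin n => (i : ℕ) < k), μ i := by
      rw [Finset.sum_filter]
      apply Finset.sum_congr rfl
      intro i _
      by_cases hik : (i : ℕ) < k <;> simp [hχ, hik]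
    have expand : ∑ i, (μ i - t) * (b i - χ i)
        = (∑ i, μ i * b i) - (∑ i, μ i * χ i) - t * (∑ i, b i) + t * (∑ i, χ i) := by
      rw [Finset.mul_sum, Finset.mul_sum, ← Finset.sum_sub_distrib, ← Finset.sum_sub_distrib,
        ← Finset.sum_add_distrib]
      exact Finset.sum_congr rfl fun i _ => by ring
    rw [expand, hbs, hχs, hμχ] at hsum
    linarith

lemma ncut_aux_kyfan {V : Type*} [Fintype V] [DecidableEq V] {k : ℕ}
    {L : Matrix V V ℝ} (hL : L.IsHermitian) (z : Fin k → V → ℝ)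
    (horth : ∀ j j', z j ⬝ᵥ z j' = if j = j' then 1 else 0) :
    ∃ c : V → ℝ, (∀ i, 0 ≤ c i) ∧ (∀ i, c i ≤ 1) ∧ (∑ i, c i = (k : ℝ)) ∧
      ∑ j, z j ⬝ᵥ L *ᵥ z j = ∑ i, hL.eigenvalues i * c i := by
  set U : Matrix V V ℝ := (hL.eigenvectorUnitary : Matrix V V ℝ) with hU
  have hUt : star U = Uᵀ := by
    rw [Matrix.star_eq_conjTranspose, Matrix.conjTranspose_eq_transpose_of_trivial]
  have hU2 : U * Uᵀ = 1 := by
    rw [← hUt]; exact (Matrix.mem_unitaryGroup_iff).mp hL.eigenvectorUnitary.2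
  have hU1 : Uᵀ * U = 1 := by
    rw [← hUt]; exact (Matrix.mem_unitaryGroup_iff').mp hL.eigenvectorUnitary.2
  have hdg : L = U * Matrix.diagonal hL.eigenvalues * Uᵀ := by
    have := hL.spectral_theorem
    rw [Unitary.conjStarAlgAut_apply] at this
    rw [hUt] at this
    exact this
  set w : Fin k → V → ℝ := fun j => Uᵀ *ᵥ z j with hw
  have hworth : ∀ j j', w j ⬝ᵥ w j' = if j = j' then 1 else 0 := by
    intro j j'
    rw [hw]
    simp only []
    rw [Matrix.dotProduct_mulVec, Matrix.vecMul_transpose, Matrix.mulVec_mulVec, hU2,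
      Matrix.one_mulVec]
    exact horth j j'
  have hquad : ∀ j, z j ⬝ᵥ L *ᵥ z j = ∑ i, hL.eigenvalues i * (w j i) ^ 2 := by
    intro j
    conv_lhs => rw [hdg]
    rw [← Matrix.mulVec_mulVec, ← Matrix.mulVec_mulVec, Matrix.dotProduct_mulVec,
      ← Matrix.mulVec_transpose]
    simp only [hw]
    simp [dotProduct, Matrix.mulVec_diagonal]
    exact Finset.sum_congr rfl fun i _ => by ring
  set c : V → ℝ := fun i => ∑ j, (w j i) ^ 2 with hc
  set P : Matrix V (Fin k) ℝ := Matrix.of (fun i j => w j i) with hP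
  have hPtP : Pᵀ * P = 1 := by
    ext j j'
    rw [Matrix.mul_apply]
    simp only [Matrix.transpose_apply, hP, Matrix.of_apply, Matrix.one_apply]
    exact hworth j j'
  set Q : Matrix V V ℝ := P * Pᵀ with hQ
  have hQQ : Q * Q = Q := by
    rw [hQ, Matrix.mul_assoc, ← Matrix.mul_assoc Pᵀ, hPtP, Matrix.one_mul]
  have hQsymm : Qᵀ = Q := by rw [hQ, Matrix.transpose_mul, Matrix.transpose_transpose]
  have hcQ : ∀ i, c i = Q i i := by
    intro i
    rw [hc, hQ]
    simp only []
    rw [Matrix.mul_apply]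
    exact Finset.sum_congr rfl fun j _ => by simp [hP, sq]
  have hc0 : ∀ i, 0 ≤ c i := fun i => Finset.sum_nonneg fun j _ => sq_nonneg _
  have hc1 : ∀ i, c i ≤ 1 := by
    intro i
    have h1 : Q i i = ∑ m, Q i m * Q m i := by
      conv_lhs => rw [← hQQ]
      rw [Matrix.mul_apply]
    have h2 : ∀ m, Q m i = Q i m := fun m => by
      conv_lhs => rw [← hQsymm]
      rfl
    have h3 : Q i i * Q i i ≤ ∑ m, Q i m * Q m i := by
      have e : Q i i * Q i i = ∑ m ∈ ({i} : Finset V), Q i m * Q m i := by simp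
      rw [e]
      apply Finset.sum_le_sum_of_subset_of_nonneg (Finset.subset_univ _)
      intro m _ _
      rw [h2 m]
      exact mul_self_nonneg _
    have h0 : 0 ≤ Q i i := by rw [← hcQ]; exact hc0 i
    rw [hcQ i]
    nlinarith [h1, h3, h0]
  have hcs : ∑ i, c i = (k : ℝ) := by
    have : ∑ i, c i = Q.trace := by
      rw [Matrix.trace]
      exact Finset.sum_congr rfl fun i _ => hcQ i
    rw [this, hQ, Matrix.trace_mul_comm, hPtP]
    simp [Matrix.trace]
  refine ⟨c, hc0, hc1, hcs, ?_⟩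
  rw [Finset.sum_congr rfl fun j _ => hquad j]
  rw [Finset.sum_comm]
  exact Finset.sum_congr rfl fun i _ => by rw [hc, Finset.mul_sum]
/-- Lower bound for the multiclass normalized hypergraph cut: the sum of the `k` smallest
eigenvalues of `L = D^{−1/2}(D−W)D^{−1/2}` is at most `Ncut(Γ_V^k)` for every partition
of `V` into `k` nonempty clusters. -/

theorem hypergraph_multiclass_ncut_lower_bound {V : Type*} [Fintype V] [DecidableEq V]
    (W : Matrix V V ℝ) (hWs : W.IsSymm) (hWnn : ∀ u v, 0 ≤ W u v) (hW0 : ∀ u, W u u = 0)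
    (d : V → ℝ) (hd : ∀ u, d u = ∑ v, W u v) (hdpos : ∀ u, 0 < d u)
    (k : ℕ) (hk : k ≤ Fintype.card V) (f : V → Fin k) (hf : Function.Surjective f) :
    let Dm : Matrix V V ℝ := Matrix.diagonal d
    let Dih : Matrix V V ℝ := Matrix.diagonal fun v => (Real.sqrt (d v))⁻¹
    let L : Matrix V V ℝ := Dih * (Dm - W) * Dih
    let X : Fin k → V → ℝ := fun j v => if f v = j then 1 else 0
    ∀ (hL : L.IsHermitian) (σ : Fin (Fintype.card V) ≃ V),
      Monotone (fun i => hL.eigenvalues (σ i)) →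
      ∑ i ∈ Finset.univ.filter (fun i : Fin (Fintype.card V) => (i : ℕ) < k),
          hL.eigenvalues (σ i)
        ≤ ∑ j : Fin k, (X j ⬝ᵥ (Dm - W).mulVec (X j)) / (X j ⬝ᵥ Dm.mulVec (X j)) := by
  intro Dm Dih L X hL σ hmono
  have hDm : Dm = Matrix.diagonal d := rfl
  have hXdef : X = fun j v => if f v = j then 1 else 0 := rfl
  have hLdef : L = Dih * (Dm - W) * Dih := rfl
  have hDih : Dih = Matrix.diagonal fun v => (Real.sqrt (d v))⁻¹ := rfl
  -- denominators
  set N : Fin k → ℝ := fun j => X j ⬝ᵥ Dm *ᵥ X j with hNdef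
  have hN : ∀ j, N j = ∑ v, if f v = j then d v else 0 := by
    intro j
    rw [hNdef]
    simp only [dotProduct, hDm, Matrix.mulVec_diagonal, hXdef]
    apply Finset.sum_congr rfl
    intro v _
    by_cases h : f v = j <;> simp [h]
  have hNpos : ∀ j, 0 < N j := by
    intro j
    obtain ⟨v0, hv0⟩ := hf j
    rw [hN j]
    apply Finset.sum_pos' (fun v _ => by by_cases h : f v = j <;> simp [h, (hdpos v).le])
    exact ⟨v0, Finset.mem_univ v0, by simp [hv0, hdpos v0]⟩
  -- the unnormalized and normalized vectors
  set y : Fin k → V → ℝ := fun j v => Real.sqrt (d v) * X j v with hy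
  set z : Fin k → V → ℝ := fun j => (Real.sqrt (N j))⁻¹ • y j with hz
  have hsq : ∀ j v, y j v * y j v = if f v = j then d v else 0 := by
    intro j v
    by_cases h : f v = j <;>
      simp [hy, hXdef, h, Real.mul_self_sqrt (hdpos v).le]
  -- orthonormality
  have horth : ∀ j j', z j ⬝ᵥ z j' = if j = j' then 1 else 0 := by
    intro j j'
    have hzz : z j ⬝ᵥ z j'
        = (Real.sqrt (N j))⁻¹ * ((Real.sqrt (N j'))⁻¹ * ∑ v, y j v * y j' v) := by
      simp only [hz, dotProduct, Pi.smul_apply, smul_eq_mul, Finset.mul_sum]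
      exact Finset.sum_congr rfl fun v _ => by ring
    by_cases h : j = j'
    · subst h
      have : ∑ v, y j v * y j v = N j := by
        rw [Finset.sum_congr rfl fun v _ => hsq j v, ← hN]
      rw [hzz, this, if_pos rfl]
      have hs : (0:ℝ) < Real.sqrt (N j) := Real.sqrt_pos.mpr (hNpos j)
      have hm : Real.sqrt (N j) * Real.sqrt (N j) = N j := Real.mul_self_sqrt (hNpos j).le
      field_simp
      rw [Real.sq_sqrt (hNpos j).le]
    · have : ∑ v, y j v * y j' v = 0 := by
        apply Finset.sum_eq_zero
        intro v _
        simp only [hy, hXdef]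
        by_cases h1 : f v = j'
        · have h2 : ¬ f v = j := fun h2 => h (h2 ▸ h1 ▸ rfl)
          simp [h2]
        · simp [h1]
      rw [hzz, this, if_neg h]
      ring
  -- quadratic form values
  have hDihy : ∀ j, Dih *ᵥ y j = X j := by
    intro j
    funext v
    rw [hDih]
    simp only [Matrix.mulVec_diagonal, hy]
    rw [← mul_assoc, inv_mul_cancel₀ (Real.sqrt_pos.mpr (hdpos v)).ne', one_mul]
  have hyDih : ∀ j (u : V → ℝ), y j ⬝ᵥ (Dih *ᵥ u) = X j ⬝ᵥ u := by
    intro j u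
    rw [hDih]
    simp only [dotProduct, Matrix.mulVec_diagonal, hy]
    apply Finset.sum_congr rfl
    intro v _
    have hv : Real.sqrt (d v) ≠ 0 := (Real.sqrt_pos.mpr (hdpos v)).ne'
    field_simp
  have hq : ∀ j, y j ⬝ᵥ L *ᵥ y j = X j ⬝ᵥ (Dm - W) *ᵥ X j := by
    intro j
    have hlv : L *ᵥ y j = Dih *ᵥ ((Dm - W) *ᵥ X j) := by
      rw [hLdef, ← Matrix.mulVec_mulVec, ← Matrix.mulVec_mulVec, hDihy]
    rw [hlv, hyDih]
  have hLz : ∀ j, z j ⬝ᵥ L *ᵥ z j = (X j ⬝ᵥ (Dm - W) *ᵥ X j) / N j := by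
    intro j
    rw [hz]
    simp only [Matrix.mulVec_smul, smul_dotProduct, dotProduct_smul,
      smul_eq_mul]
    rw [hq]
    have hinv : ((Real.sqrt (N j))⁻¹ : ℝ) * (Real.sqrt (N j))⁻¹ = (N j)⁻¹ := by
      rw [← mul_inv, Real.mul_self_sqrt (hNpos j).le]
    rw [← mul_assoc, hinv, div_eq_mul_inv, mul_comm]
  -- Ky Fan
  obtain ⟨c, hc0, hc1, hcs, hsum⟩ := ncut_aux_kyfan hL z horth
  have hRHS : ∑ j : Fin k, (X j ⬝ᵥ (Dm - W).mulVec (X j)) / (X j ⬝ᵥ Dm.mulVec (X j))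
      = ∑ i, hL.eigenvalues i * c i := by
    rw [← hsum]
    exact Finset.sum_congr rfl fun j _ => (hLz j).symm
  rw [hRHS]
  have hre : ∑ i, hL.eigenvalues i * c i
      = ∑ i : Fin (Fintype.card V), hL.eigenvalues (σ i) * c (σ i) :=
    (Equiv.sum_comp σ (fun v => hL.eigenvalues v * c v)).symm
  rw [hre]
  apply ncut_aux_exchange hk _ _ hmono (fun i => hc0 (σ i)) (fun i => hc1 (σ i))
  rw [Equiv.sum_comp σ c, hcs]
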